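/- Let P(z) = a_n ∏_{ν=1}^{n} (z − z_ν) be a complex polynomial of degree n ≥ 1 whose zeros satisfy |z_ν| ≥ k_ν ≥ 1 for 1 ≤ ν ≤ n. Set t₀ = 1 + n / (∑_{ν=1}^{n} 1/(k_ν − 1)) if k_ν > 1 for all ν, and t₀ = 1 if k_ν = 1 for some ν. Then max_{|z|=1} |P′(z)| ≤ (n/(1 + t₀)) · max_{|z|=1} |P(z)|. -/

import Mathlib

open Polynomial Finset

noncomputable def Complex.abs : AbsoluteValue ℂ ℝ := IsAbsoluteValue.toAbsoluteValue (norm : ℂ → ℝ)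

lemma Complex.norm_eq_abs (z : ℂ) : ‖z‖ = Complex.abs z := rfl

lemma Complex.sq_abs (z : ℂ) : Complex.abs z ^ 2 = Complex.normSq z := by
  rw [← Complex.norm_eq_abs, Complex.sq_norm]

lemma Complex.abs_conj (z : ℂ) : Complex.abs ((starRingEnd ℂ) z) = Complex.abs z := by
  rw [← Complex.norm_eq_abs, ← Complex.norm_eq_abs, Complex.norm_conj]

lemma Complex.abs_ofReal (r : ℝ) : Complex.abs (r : ℂ) = |r| := by
  rw [← Complex.norm_eq_abs, Complex.norm_real, Real.norm_eq_abs]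

lemma Complex.abs_abs (z : ℂ) : |Complex.abs z| = Complex.abs z :=
  abs_of_nonneg (Complex.abs.nonneg z)

lemma Complex.abs_natCast (m : ℕ) : Complex.abs (m : ℂ) = m := by
  rw [← Complex.norm_eq_abs, Complex.norm_natCast]

lemma Complex.continuous_abs : Continuous Complex.abs := continuous_norm

lemma abs_le_of_sq_le_sq'' {a b : ℝ} (ha : 0 ≤ a) (hb : 0 ≤ b) (h : a^2 ≤ b^2) : a ≤ b := by
  nlinarith

lemma half_le_re_div {z ζ : ℂ} (hz : Complex.abs z = 1) (hζ : Complex.abs ζ ≤ 1) (hne : z ≠ ζ) :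
    (1:ℝ)/2 ≤ (z / (z - ζ)).re := by
  have hD : 0 < Complex.normSq (z - ζ) := by
    rw [Complex.normSq_pos]; exact sub_ne_zero.2 hne
  have h1 : Complex.normSq z = 1 := by
    rw [← Complex.sq_abs, hz]; norm_num
  have h2 : Complex.normSq ζ ≤ 1 := by
    rw [← Complex.sq_abs]; nlinarith [Complex.abs.nonneg ζ]
  rw [Complex.div_re, ← add_div, le_div_iff₀ hD]
  simp only [Complex.normSq_apply, Complex.sub_re, Complex.sub_im] at *
  nlinarith

lemma re_div_le_half {z ζ : ℂ} (hz : Complex.abs z = 1) (hζ : 1 ≤ Complex.abs ζ) (hne : z ≠ ζ) :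
    (z / (z - ζ)).re ≤ (1:ℝ)/2 := by
  have hD : 0 < Complex.normSq (z - ζ) := by
    rw [Complex.normSq_pos]; exact sub_ne_zero.2 hne
  have h1 : Complex.normSq z = 1 := by
    rw [← Complex.sq_abs, hz]; norm_num
  have h2 : 1 ≤ Complex.normSq ζ := by
    rw [← Complex.sq_abs]; nlinarith
  rw [Complex.div_re, ← add_div, div_le_iff₀ hD]
  simp only [Complex.normSq_apply, Complex.sub_re, Complex.sub_im] at *
  nlinarith

lemma disk_lemma {w zv : ℂ} {kk : ℝ} (hw : Complex.abs w = 1) (hk : 1 < kk)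
    (hz : kk ≤ Complex.abs zv) :
    Complex.abs (w / (w - zv) + 1 / ((kk^2 - 1 : ℝ):ℂ)) ≤ kk / (kk^2 - 1) := by
  have hk0 : (0:ℝ) < kk^2 - 1 := by nlinarith
  have hwz : w ≠ zv := by
    intro h; rw [h] at hw; linarith [hz.trans_eq hw]
  have hd : w - zv ≠ 0 := sub_ne_zero.2 hwz
  have habs2 : 0 < Complex.abs (w - zv) := Complex.abs.pos hd
  have h1 : w.re^2 + w.im^2 = 1 := by
    have := Complex.sq_abs w; rw [hw] at this
    simp [Complex.normSq_apply] at this; nlinarith [this]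
  have h2 : kk^2 ≤ zv.re^2 + zv.im^2 := by
    have := Complex.sq_abs zv
    simp [Complex.normSq_apply] at this
    nlinarith [this, Complex.abs.nonneg zv]
  have key : Complex.abs (((kk^2:ℝ):ℂ) * w - zv) ≤ kk * Complex.abs (w - zv) := by
    apply abs_le_of_sq_le_sq'' (Complex.abs.nonneg _) (by positivity)
    rw [mul_pow, Complex.sq_abs, Complex.sq_abs]
    simp only [Complex.normSq_apply, Complex.sub_re, Complex.sub_im, Complex.mul_re,
      Complex.mul_im, Complex.ofReal_re, Complex.ofReal_im]
    have e1 : kk^4 * (w.re^2 + w.im^2) = kk^4 := by rw [h1, mul_one]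
    have e2 : kk^2 * (w.re^2 + w.im^2) = kk^2 := by rw [h1, mul_one]
    have e3 : 0 ≤ (kk^2 - 1) * ((zv.re^2 + zv.im^2) - kk^2) :=
      mul_nonneg hk0.le (by linarith)
    nlinarith [e1, e2, e3]
  have hkc : ((kk^2 - 1:ℝ):ℂ) ≠ 0 := by
    rw [Complex.ofReal_ne_zero]; linarith
  have heq : w / (w - zv) + 1 / ((kk^2 - 1:ℝ):ℂ)
      = (((kk^2:ℝ):ℂ) * w - zv) / (((kk^2 - 1:ℝ):ℂ) * (w - zv)) := by
    have hnum : w * ((kk^2-1:ℝ):ℂ) + (w - zv) * 1 = ((kk^2:ℝ):ℂ) * w - zv := by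
      push_cast; ring
    rw [div_add_div _ _ hd hkc, hnum, mul_comm (w - zv)]
  rw [heq, map_div₀, map_mul, Complex.abs_ofReal, abs_of_pos hk0,
    div_le_div_iff₀ (by positivity) hk0]
  nlinarith [key, hk0, habs2]

lemma multiset_logderiv (s : Multiset ℂ) (z : ℂ) (hz : ∀ ζ ∈ s, z ≠ ζ) :
    z * Polynomial.eval z (Polynomial.derivative (s.map fun ζ => X - C ζ).prod)
      = (s.map fun ζ => z / (z - ζ)).sum * Polynomial.eval z (s.map fun ζ => X - C ζ).prod := by
  induction s using Multiset.induction with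
  | empty => simp
  | cons a s ih =>
    have hza : z ≠ a := hz a (Multiset.mem_cons_self a s)
    have hz' : ∀ ζ ∈ s, z ≠ ζ := fun ζ h => hz ζ (Multiset.mem_cons_of_mem h)
    have hzan : z - a ≠ 0 := sub_ne_zero.2 hza
    simp only [Multiset.map_cons, Multiset.prod_cons, Multiset.sum_cons, derivative_mul,
      derivative_sub, derivative_X, derivative_C, sub_zero, one_mul, eval_add, eval_mul,
      eval_sub, eval_X, eval_C]
    calc z * (eval z (s.map fun ζ => X - C ζ).prod
            + (z - a) * eval z (derivative (s.map fun ζ => X - C ζ).prod))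
        = z * eval z (s.map fun ζ => X - C ζ).prod
            + (z - a) * (z * eval z (derivative (s.map fun ζ => X - C ζ).prod)) := by ring
      _ = z * eval z (s.map fun ζ => X - C ζ).prod
            + (z - a) * ((s.map fun ζ => z / (z - ζ)).sum * eval z (s.map fun ζ => X - C ζ).prod) := by
          rw [ih hz']
      _ = (z / (z - a) + (s.map fun ζ => z / (z - ζ)).sum)
            * ((z - a) * eval z (s.map fun ζ => X - C ζ).prod) := by
          field_simp

lemma lemL {c : ℂ} {s : Multiset ℂ} {T : Polynomial ℂ}
    (hT : T = C c * (s.map fun ζ => X - C ζ).prod)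
    (hs : ∀ ζ ∈ s, Complex.abs ζ ≤ 1) {z : ℂ} (hz : Complex.abs z = 1) :
    Complex.abs ((Multiset.card s : ℂ) * T.eval z - z * T.derivative.eval z)
      ≤ Complex.abs (z * T.derivative.eval z) := by
  by_cases hTz : T.eval z = 0
  · rw [hTz, mul_zero, zero_sub, map_neg_eq_map]
  · have hprodne : Polynomial.eval z (s.map fun ζ => X - C ζ).prod ≠ 0 := by
      intro h; apply hTz; rw [hT]; simp [h]
    have hne : ∀ ζ ∈ s, z ≠ ζ := by
      intro ζ hζ heq
      apply hprodne
      rw [eval_multiset_prod]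
      apply Multiset.prod_eq_zero
      rw [Multiset.map_map]
      refine Multiset.mem_map.2 ⟨ζ, hζ, ?_⟩
      simp [heq.symm]
    set S : ℂ := (s.map fun ζ => z / (z - ζ)).sum with hS
    have hlog : z * eval z (derivative T) = S * eval z T := by
      rw [hT, derivative_C_mul, eval_mul, eval_C, eval_mul, eval_C,
        ← mul_assoc, mul_comm z c, mul_assoc, multiset_logderiv s z hne]
      ring
    have hre : (Multiset.card s : ℝ)/2 ≤ S.re := by
      have : S.re = (s.map fun ζ => (z / (z - ζ)).re).sum := by
        rw [hS]
        have := map_multiset_sum Complex.reAddGroupHom (s.map fun ζ => z / (z - ζ))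
        simpa [Multiset.map_map, Function.comp] using this
      rw [this]
      have hb : ((s.map fun ζ => (1:ℝ)/2).sum) ≤ (s.map fun ζ => (z / (z - ζ)).re).sum := by
        apply Multiset.sum_map_le_sum_map
        intro ζ hζ
        exact half_le_re_div hz (hs ζ hζ) (hne ζ hζ)
      calc (Multiset.card s : ℝ)/2 = (s.map fun ζ => (1:ℝ)/2).sum := by
            rw [Multiset.map_const', Multiset.sum_replicate, nsmul_eq_mul]; ring
        _ ≤ _ := hb
    have habs : Complex.abs ((Multiset.card s : ℂ) - S) ≤ Complex.abs S := by
      apply abs_le_of_sq_le_sq'' (Complex.abs.nonneg _) (Complex.abs.nonneg _)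
      rw [Complex.sq_abs, Complex.sq_abs]
      simp only [Complex.normSq_apply, Complex.sub_re, Complex.sub_im, Complex.natCast_re,
        Complex.natCast_im]
      have hn : (0:ℝ) ≤ (Multiset.card s : ℝ) := Nat.cast_nonneg _
      nlinarith [hre, hn]
    calc Complex.abs ((Multiset.card s : ℂ) * T.eval z - z * T.derivative.eval z)
        = Complex.abs (((Multiset.card s : ℂ) - S) * T.eval z) := by
          rw [hlog]; ring_nf
      _ ≤ Complex.abs (S * T.eval z) := by
          rw [map_mul, map_mul]
          exact mul_le_mul_of_nonneg_right habs (Complex.abs.nonneg _)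
      _ = Complex.abs (z * T.derivative.eval z) := by rw [← hlog]


lemma derivative_finset_prod {n : ℕ} (f : Fin n → ℂ) :
    derivative (∏ ν, (X - C (f ν))) = ∑ i, ∏ j ∈ univ.erase i, (X - C (f j)) := by
  rw [Finset.prod_eq_multiset_prod, derivative_prod]
  simp only [derivative_sub, derivative_X, derivative_C, sub_zero, mul_one]
  rw [Finset.sum_eq_multiset_sum]
  congr 1

noncomputable abbrev Qc (n : ℕ) (a : ℂ) (z : Fin n → ℂ) : ℂ :=
  (starRingEnd ℂ) a * ∏ ν, (-((starRingEnd ℂ) (z ν)))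

noncomputable def Qp (n : ℕ) (a : ℂ) (z : Fin n → ℂ) : Polynomial ℂ :=
  C (Qc n a z) * ∏ ν, (X - C (((starRingEnd ℂ) (z ν))⁻¹))

variable {n : ℕ} {a : ℂ} {z : Fin n → ℂ} {P : Polynomial ℂ}

lemma evalP (hP : P = C a * ∏ ν, (X - C (z ν))) (w : ℂ) :
    eval w P = a * ∏ ν, (w - z ν) := by
  rw [hP]; simp [eval_prod]

lemma evalQ (w : ℂ) :
    eval w (Qp n a z) = Qc n a z * ∏ ν, (w - ((starRingEnd ℂ) (z ν))⁻¹) := by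
  rw [Qp]; simp [eval_prod]

lemma evalP' (hP : P = C a * ∏ ν, (X - C (z ν))) (w : ℂ) :
    eval w (derivative P) = a * ∑ i, ∏ j ∈ univ.erase i, (w - z j) := by
  rw [hP, derivative_C_mul, derivative_finset_prod]
  simp [eval_prod, eval_finset_sum]

lemma evalQ' (w : ℂ) :
    eval w (derivative (Qp n a z))
      = Qc n a z * ∑ i, ∏ j ∈ univ.erase i, (w - ((starRingEnd ℂ) (z j))⁻¹) := by
  rw [Qp, derivative_C_mul, derivative_finset_prod]
  simp [eval_prod, eval_finset_sum]

lemma identI1 (hP : P = C a * ∏ ν, (X - C (z ν))) (hz0 : ∀ ν, z ν ≠ 0)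
    {u : ℂ} (hu : u * (starRingEnd ℂ) u = 1) :
    (starRingEnd ℂ) (eval u (Qp n a z)) = ((starRingEnd ℂ) u)^n * eval u P := by
  rw [evalQ, evalP hP, map_mul, map_mul, map_prod, map_prod]
  simp only [map_sub, map_neg, Complex.conj_conj, map_inv₀]
  have hfac : ∀ x : Fin n, (-(z x)) * ((starRingEnd ℂ) u - (z x)⁻¹)
      = (starRingEnd ℂ) u * (u - z x) := by
    intro x
    have h1 : z x * (z x)⁻¹ = 1 := mul_inv_cancel₀ (hz0 x)
    linear_combination h1 - hu
  calc (a * ∏ x, -(z x)) * ∏ x, ((starRingEnd ℂ) u - (z x)⁻¹)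
      = a * ∏ x, ((-(z x)) * ((starRingEnd ℂ) u - (z x)⁻¹)) := by
        rw [prod_mul_distrib]; ring
    _ = a * ∏ x, ((starRingEnd ℂ) u * (u - z x)) := by
        rw [prod_congr rfl fun x _ => hfac x]
    _ = ((starRingEnd ℂ) u)^n * (a * ∏ ν, (u - z ν)) := by
        rw [prod_mul_distrib, prod_const, card_univ, Fintype.card_fin]; ring

lemma finset_logderiv (hP : P = C a * ∏ ν, (X - C (z ν))) {w : ℂ} (hw : ∀ ν, w ≠ z ν) :
    w * eval w (derivative P) = (∑ ν, w / (w - z ν)) * eval w P := by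
  rw [evalP' hP, evalP hP, Finset.mul_sum, Finset.mul_sum, Finset.sum_mul]
  apply Finset.sum_congr rfl
  intro i _
  have hne : w - z i ≠ 0 := sub_ne_zero.2 (hw i)
  have hprod : ∏ ν, (w - z ν) = (w - z i) * ∏ j ∈ univ.erase i, (w - z j) :=
    (Finset.mul_prod_erase univ _ (Finset.mem_univ i)).symm
  rw [hprod]
  field_simp

lemma erase_card_aux (i : Fin n) : (univ.erase i).card = n - 1 := by
  rw [card_erase_of_mem (mem_univ i), card_univ, Fintype.card_fin]

lemma identI2 (hP : P = C a * ∏ ν, (X - C (z ν))) (hz0 : ∀ ν, z ν ≠ 0)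
    {u : ℂ} (hu : u * (starRingEnd ℂ) u = 1) :
    (starRingEnd ℂ) (eval u (derivative (Qp n a z))) * u^(n-1)
      = (n:ℂ) * eval u P - u * eval u (derivative P) := by
  have hKQc : (starRingEnd ℂ) (Qc n a z) = a * ∏ ν, (-(z ν)) := by
    simp [Qc, map_prod]
  rw [evalQ', evalP hP, evalP' hP, map_mul, hKQc, map_sum]
  simp only [map_prod, map_sub, map_inv₀, Complex.conj_conj]
  calc (a * ∏ ν, -(z ν)) * (∑ i, ∏ j ∈ univ.erase i, ((starRingEnd ℂ) u - (z j)⁻¹)) * u^(n-1)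
      = ∑ i, (a * ∏ ν, -(z ν)) * (∏ j ∈ univ.erase i, ((starRingEnd ℂ) u - (z j)⁻¹)) * u^(n-1) := by
        rw [Finset.mul_sum, Finset.sum_mul]
    _ = ∑ i, a * (-(z i)) * ∏ j ∈ univ.erase i, (u - z j) := by
        apply Finset.sum_congr rfl
        intro i _
        have hi : ∏ ν, -(z ν) = (-(z i)) * ∏ j ∈ univ.erase i, -(z j) :=
          (Finset.mul_prod_erase univ _ (Finset.mem_univ i)).symm
        have hu' : u^(n-1) = ∏ _j ∈ univ.erase i, u := by
          rw [prod_const, erase_card_aux]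
        have hcomb : ∏ j ∈ univ.erase i, ((-(z j)) * ((starRingEnd ℂ) u - (z j)⁻¹) * u)
            = ((∏ j ∈ univ.erase i, -(z j)) * ∏ j ∈ univ.erase i, ((starRingEnd ℂ) u - (z j)⁻¹))
              * ∏ _j ∈ univ.erase i, u := by
          rw [prod_mul_distrib, prod_mul_distrib]
        have hfac : ∀ j ∈ univ.erase i,
            (-(z j)) * ((starRingEnd ℂ) u - (z j)⁻¹) * u = u - z j := by
          intro j _
          have hj : z j * (z j)⁻¹ = 1 := mul_inv_cancel₀ (hz0 j)
          linear_combination (-(z j)) * hu + u * hj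
        calc (a * ∏ ν, -(z ν)) * (∏ j ∈ univ.erase i, ((starRingEnd ℂ) u - (z j)⁻¹)) * u^(n-1)
            = a * (-(z i)) * ∏ j ∈ univ.erase i,
                ((-(z j)) * ((starRingEnd ℂ) u - (z j)⁻¹) * u) := by
              rw [hi, hu', hcomb]; ring
          _ = a * (-(z i)) * ∏ j ∈ univ.erase i, (u - z j) := by
              rw [Finset.prod_congr rfl hfac]
    _ = (n:ℂ) * (a * ∏ ν, (u - z ν)) - u * (a * ∑ i, ∏ j ∈ univ.erase i, (u - z j)) := by
        have hn' : (n:ℂ) * (a * ∏ ν, (u - z ν)) = ∑ _i : Fin n, a * ∏ ν, (u - z ν) := by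
          rw [Finset.sum_const, card_univ, Fintype.card_fin, nsmul_eq_mul]
        rw [hn', Finset.mul_sum, Finset.mul_sum, ← Finset.sum_sub_distrib]
        apply Finset.sum_congr rfl
        intro i _
        rw [show ∏ ν, (u - z ν) = (u - z i) * ∏ j ∈ univ.erase i, (u - z j) from
          (Finset.mul_prod_erase univ _ (Finset.mem_univ i)).symm]
        ring

lemma identI3 (hP : P = C a * ∏ ν, (X - C (z ν))) (hz0 : ∀ ν, z ν ≠ 0)
    {u : ℂ} (hu : u * (starRingEnd ℂ) u = 1) :
    (starRingEnd ℂ) ((n:ℂ) * eval u (Qp n a z) - u * eval u (derivative (Qp n a z)))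
      = ((starRingEnd ℂ) u)^(n-1) * eval u (derivative P) := by
  have step1 : (n:ℂ) * eval u (Qp n a z) - u * eval u (derivative (Qp n a z))
      = Qc n a z * ∑ i, (-(((starRingEnd ℂ) (z i))⁻¹))
          * ∏ j ∈ univ.erase i, (u - ((starRingEnd ℂ) (z j))⁻¹) := by
    rw [evalQ, evalQ']
    have hn' : (n:ℂ) * (Qc n a z * ∏ ν, (u - ((starRingEnd ℂ) (z ν))⁻¹))
        = ∑ _i : Fin n, Qc n a z * ∏ ν, (u - ((starRingEnd ℂ) (z ν))⁻¹) := by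
      rw [Finset.sum_const, card_univ, Fintype.card_fin, nsmul_eq_mul]
    rw [hn', Finset.mul_sum, Finset.mul_sum, ← Finset.sum_sub_distrib, Finset.mul_sum]
    apply Finset.sum_congr rfl
    intro i _
    rw [show ∏ ν, (u - ((starRingEnd ℂ) (z ν))⁻¹)
        = (u - ((starRingEnd ℂ) (z i))⁻¹) * ∏ j ∈ univ.erase i, (u - ((starRingEnd ℂ) (z j))⁻¹) from
      (Finset.mul_prod_erase univ _ (Finset.mem_univ i)).symm]
    ring
  rw [step1, map_mul, map_sum, evalP' hP]
  have hKQc : (starRingEnd ℂ) (Qc n a z) = a * ∏ ν, (-(z ν)) := by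
    simp [Qc, map_prod]
  rw [hKQc]
  simp only [map_mul, map_prod, map_sub, map_neg, map_inv₀, Complex.conj_conj]
  rw [Finset.mul_sum, Finset.mul_sum, Finset.mul_sum]
  apply Finset.sum_congr rfl
  intro i _
  have hi : ∏ ν, -(z ν) = (-(z i)) * ∏ j ∈ univ.erase i, -(z j) :=
    (Finset.mul_prod_erase univ _ (Finset.mem_univ i)).symm
  have hu' : ((starRingEnd ℂ) u)^(n-1) = ∏ _j ∈ univ.erase i, (starRingEnd ℂ) u := by
    rw [prod_const, erase_card_aux]
  have hzi : (z i) * (z i)⁻¹ = 1 := mul_inv_cancel₀ (hz0 i)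
  have hfac : ∀ j ∈ univ.erase i,
      (-(z j)) * ((starRingEnd ℂ) u - (z j)⁻¹) = (starRingEnd ℂ) u * (u - z j) := by
    intro j _
    have hj : z j * (z j)⁻¹ = 1 := mul_inv_cancel₀ (hz0 j)
    linear_combination hj - hu
  calc (a * ∏ ν, -(z ν)) * (-(z i)⁻¹ * ∏ j ∈ univ.erase i, ((starRingEnd ℂ) u - (z j)⁻¹))
      = a * (z i * (z i)⁻¹) * ∏ j ∈ univ.erase i, ((-(z j)) * ((starRingEnd ℂ) u - (z j)⁻¹)) := by
        rw [hi, prod_mul_distrib]; ring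
    _ = a * ∏ j ∈ univ.erase i, ((starRingEnd ℂ) u * (u - z j)) := by
        rw [hzi, Finset.prod_congr rfl hfac]; ring
    _ = (starRingEnd ℂ) u ^ (n-1) * (a * ∏ j ∈ univ.erase i, (u - z j)) := by
        rw [prod_mul_distrib, hu']; ring

lemma identI4 (hP : P = C a * ∏ ν, (X - C (z ν))) (hz0 : ∀ ν, z ν ≠ 0)
    {w : ℂ} (hw : w ≠ 0) :
    eval w P = w^n * (starRingEnd ℂ) (eval (((starRingEnd ℂ) w)⁻¹) (Qp n a z)) := by
  have hw1 : w * w⁻¹ = 1 := mul_inv_cancel₀ hw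
  rw [evalP hP, evalQ, map_mul]
  have hKQc : (starRingEnd ℂ) (Qc n a z) = a * ∏ ν, (-(z ν)) := by
    simp [Qc, map_prod]
  rw [hKQc]
  simp only [map_prod, map_sub, map_inv₀, Complex.conj_conj]
  have hwn : w^n = ∏ _ν : Fin n, w := by rw [prod_const, card_univ, Fintype.card_fin]
  calc a * ∏ ν, (w - z ν)
      = a * ∏ ν, (w * (-(z ν)) * (w⁻¹ - (z ν)⁻¹)) := by
        congr 1
        apply Finset.prod_congr rfl
        intro ν _
        have hj : z ν * (z ν)⁻¹ = 1 := mul_inv_cancel₀ (hz0 ν)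
        linear_combination (z ν) * hw1 - w * hj
    _ = w^n * ((a * ∏ ν, -(z ν)) * ∏ ν, (w⁻¹ - (z ν)⁻¹)) := by
        rw [prod_mul_distrib, prod_mul_distrib, hwn]; ring

lemma identI5 (hP : P = C a * ∏ ν, (X - C (z ν))) (hz0 : ∀ ν, z ν ≠ 0)
    {w : ℂ} (hw : w ≠ 0) :
    eval w (Qp n a z) = w^n * (starRingEnd ℂ) (eval (((starRingEnd ℂ) w)⁻¹) P) := by
  have hw1 : w * w⁻¹ = 1 := mul_inv_cancel₀ hw
  rw [evalQ, evalP hP, map_mul]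
  simp only [map_prod, map_sub, map_inv₀, Complex.conj_conj, Qc]
  have hwn : w^n = ∏ _ν : Fin n, w := by rw [prod_const, card_univ, Fintype.card_fin]
  calc ((starRingEnd ℂ) a * ∏ ν, -((starRingEnd ℂ) (z ν)))
        * ∏ ν, (w - ((starRingEnd ℂ) (z ν))⁻¹)
      = (starRingEnd ℂ) a
          * ∏ ν, ((-((starRingEnd ℂ) (z ν))) * (w - ((starRingEnd ℂ) (z ν))⁻¹)) := by
        rw [prod_mul_distrib]; ring
    _ = (starRingEnd ℂ) a * ∏ ν, (w * (w⁻¹ - (starRingEnd ℂ) (z ν))) := by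
        congr 1
        apply Finset.prod_congr rfl
        intro ν _
        have hzν : (starRingEnd ℂ) (z ν) ≠ 0 := star_ne_zero.2 (hz0 ν)
        have hj : (starRingEnd ℂ) (z ν) * ((starRingEnd ℂ) (z ν))⁻¹ = 1 := mul_inv_cancel₀ hzν
        linear_combination hj - hw1
    _ = w^n * ((starRingEnd ℂ) a * ∏ ν, (w⁻¹ - (starRingEnd ℂ) (z ν))) := by
        rw [prod_mul_distrib, hwn]; ring

open Finset in

lemma maxmod {R : Polynomial ℂ} {M : ℝ}
    (h : ∀ ζ : ℂ, Complex.abs ζ = 1 → Complex.abs (eval ζ R) ≤ M) :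
    ∀ ζ : ℂ, Complex.abs ζ ≤ 1 → Complex.abs (eval ζ R) ≤ M := by
  intro ζ hζ
  have hdiff : DiffContOnCl ℂ (fun ζ => eval ζ R) (Metric.ball (0:ℂ) 1) :=
    (R.differentiable).diffContOnCl
  have := Complex.norm_le_of_forall_mem_frontier_norm_le
    (Metric.isBounded_ball (x := (0:ℂ)) (r := 1)) hdiff (C := M) ?_ (z := ζ) ?_
  · simpa [Complex.norm_eq_abs] using this
  · intro x hx
    rw [frontier_ball (0:ℂ) one_ne_zero] at hx
    simp only [Metric.mem_sphere, dist_zero_right, Complex.norm_eq_abs] at hx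
    simpa [Complex.norm_eq_abs] using h x hx
  · rw [closure_ball (0:ℂ) one_ne_zero]
    simpa [Complex.norm_eq_abs] using hζ

lemma coeff_facts {n : ℕ} (c : ℂ) (hc : c ≠ 0) (f : Fin n → ℂ) :
    (C c * ∏ ν, (X - C (f ν))).natDegree = n ∧ (C c * ∏ ν, (X - C (f ν))).coeff n = c := by
  have hm : (∏ ν : Fin n, (X - C (f ν))).Monic :=
    monic_prod_of_monic _ _ fun ν _ => monic_X_sub_C _
  have hd : (∏ ν : Fin n, (X - C (f ν))).natDegree = n := by
    rw [natDegree_prod_of_monic _ _ fun ν _ => monic_X_sub_C _]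
    simp
  constructor
  · rw [natDegree_C_mul hc, hd]
  · rw [coeff_C_mul]
    have h1 := hm.coeff_natDegree
    rw [hd] at h1
    rw [h1, mul_one]

lemma Tfacts {n : ℕ} {F : Polynomial ℂ} (hFdeg : F.natDegree = n)
    {l : ℂ} (hne : F.coeff n + l ≠ 0) :
    (F + C l * X^n).natDegree = n ∧ (F + C l * X^n).coeff n = F.coeff n + l := by
  have hcoeff : (F + C l * X^n).coeff n = F.coeff n + l := by
    rw [coeff_add, coeff_C_mul, coeff_X_pow, if_pos rfl, mul_one]
  refine ⟨le_antisymm ?_ (le_natDegree_of_ne_zero (by rw [hcoeff]; exact hne)), hcoeff⟩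
  refine (natDegree_add_le _ _).trans ?_
  simp only [hFdeg, max_le_iff, le_refl, true_and]
  exact (natDegree_C_mul_le _ _).trans (by rw [natDegree_X_pow])

lemma Tfactored {n : ℕ} {T : Polynomial ℂ} (hdeg : T.natDegree = n) (hT0 : T ≠ 0) :
    Multiset.card T.roots = n ∧ C (T.coeff n) * (T.roots.map fun r => X - C r).prod = T := by
  have hsplit : Splits T := IsAlgClosed.splits T
  have hcard : T.natDegree = Multiset.card T.roots := by
    exact hsplit.natDegree_eq_card_roots
  refine ⟨by rw [← hcard, hdeg], ?_⟩
  have h2 : T.leadingCoeff = T.coeff n := by rw [leadingCoeff, hdeg]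
  rw [← h2]
  exact C_leadingCoeff_mul_prod_multiset_X_sub_C hcard.symm


lemma keystepA {n : ℕ} (hn : 1 ≤ n) {M : ℝ} (hM : 0 < M)
    {F G : Polynomial ℂ} (hFdeg : F.natDegree = n) (hFc : Complex.abs (F.coeff n) ≤ M)
    (hrel : ∀ r : ℂ, r ≠ 0 →
      eval r F = r^n * (starRingEnd ℂ) (eval (((starRingEnd ℂ) r)⁻¹) G))
    (hGin : ∀ ζ : ℂ, Complex.abs ζ ≤ 1 → Complex.abs (eval ζ G) ≤ M)
    {u : ℂ} (hu : Complex.abs u = 1) {ρ : ℝ} (hρ : 1 < ρ) :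
    Complex.abs ((n:ℂ) * eval u F - u * eval u (derivative F))
      ≤ |Complex.abs (eval u (derivative F)) - ρ * n * M| := by
  set v : ℂ := u * eval u (derivative F) with hv
  have hvabs : Complex.abs v = Complex.abs (eval u (derivative F)) := by
    rw [hv, map_mul, hu, one_mul]
  set lam : ℂ := if v = 0 then (ρ:ℂ) else -(ρ:ℂ) * (v / (Complex.abs v : ℂ)) * ((starRingEnd ℂ) u)^n with hlam
  have habslam : Complex.abs lam = ρ := by
    rw [hlam]
    split_ifs with h
    · simp [Complex.abs_ofReal, abs_of_pos (lt_trans one_pos hρ)]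
    · have hva : Complex.abs v ≠ 0 := by
        simpa [Complex.abs.eq_zero] using h
      simp only [map_mul, map_neg_eq_map, map_pow, map_div₀, Complex.abs_conj, hu,
        Complex.abs_ofReal, Complex.abs_abs]
      rw [div_self hva, one_pow]
      simp [abs_of_pos (lt_trans one_pos hρ)]
  set l : ℂ := lam * (M:ℂ) with hl
  have habsl : Complex.abs l = ρ * M := by
    rw [hl, map_mul, habslam, Complex.abs_ofReal, abs_of_pos hM]
  have hlM : M < Complex.abs l := by
    rw [habsl]; nlinarith
  have hne : F.coeff n + l ≠ 0 := by
    intro h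
    have h' : l = -(F.coeff n) := by linear_combination h
    rw [h', map_neg_eq_map] at hlM
    linarith
  set T : Polynomial ℂ := F + C l * X^n with hT
  obtain ⟨hTdeg, hTcoeff⟩ := Tfacts hFdeg hne
  have hT0 : T ≠ 0 := fun h => by
    apply hne; rw [← hTcoeff, ← hT, h, coeff_zero]
  rw [← hT] at hTdeg hTcoeff
  obtain ⟨hcard, hfact⟩ := Tfactored hTdeg hT0
  have hroots : ∀ r ∈ T.roots, Complex.abs r ≤ 1 := by
    intro r hr
    by_contra habs
    push_neg at habs
    have hr0 : r ≠ 0 := by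
      intro h; rw [h] at habs; simp at habs; linarith
    have hre : eval r T = 0 := (isRoot_of_mem_roots hr)
    have hFr : eval r F = -l * r^n := by
      have h0 : eval r F + l * r^n = 0 := by
        simpa [hT] using hre
      linear_combination h0
    have h1 : Complex.abs (eval r F) = (ρ * M) * Complex.abs r ^ n := by
      rw [hFr, map_mul, map_neg_eq_map, habsl, map_pow]
    have h2 : Complex.abs (eval r F) ≤ M * Complex.abs r ^ n := by
      rw [hrel r hr0, map_mul, map_pow, Complex.abs_conj]
      have hinv : Complex.abs (((starRingEnd ℂ) r)⁻¹) ≤ 1 := by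
        rw [map_inv₀, Complex.abs_conj, inv_le_one_iff₀]
        right; linarith
      rw [mul_comm M]
      exact mul_le_mul_of_nonneg_left (hGin _ hinv) (by positivity)
    have hrn : (0:ℝ) < Complex.abs r ^ n := by positivity
    nlinarith
  have hlemL := lemL (c := T.coeff n) (s := T.roots) (T := T) hfact.symm hroots hu
  rw [hcard] at hlemL
  have huKu : u * (starRingEnd ℂ) u = 1 := by
    rw [Complex.mul_conj]
    norm_cast
    rw [← Complex.sq_abs, hu]; norm_num
  have hun : u^(n-1) * u = u^n := by
    rw [mul_comm, ← pow_succ']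
    congr 1
    omega
  have hevalT : eval u T = eval u F + l * u^n := by simp [hT]
  have hevalT' : u * eval u (derivative T) = v + (n:ℂ) * l * u^n := by
    rw [hT, derivative_add, derivative_C_mul, derivative_X_pow]
    simp only [eval_add, eval_mul, eval_C, eval_pow, eval_X, eval_natCast]
    calc u * (eval u (derivative F) + l * ((n:ℂ) * u^(n-1)))
        = v + (n:ℂ) * l * (u^(n-1) * u) := by rw [hv]; ring
      _ = v + (n:ℂ) * l * u^n := by rw [hun]
  have hmain : (n:ℂ) * eval u T - u * eval u (derivative T)
      = (n:ℂ) * eval u F - u * eval u (derivative F) := by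
    rw [hevalT, hevalT', hv]; ring
  rw [hmain, hevalT'] at hlemL
  refine hlemL.trans (le_of_eq ?_)
  by_cases hv0 : v = 0
  · rw [hv0, zero_add]
    have h0 : Complex.abs (eval u (derivative F)) = 0 := by rw [← hvabs, hv0, map_zero]
    rw [h0, zero_sub, abs_neg, map_mul, map_mul, map_pow, hu, one_pow, mul_one,
      habsl, Complex.abs_natCast, abs_of_nonneg (by positivity)]
    ring
  · have hva : (0:ℝ) < Complex.abs v := Complex.abs.pos hv0
    have hvav : (Complex.abs v : ℂ) ≠ 0 := Complex.ofReal_ne_zero.2 hva.ne'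
    have hKuu : ((starRingEnd ℂ) u)^n * u^n = 1 := by
      rw [← mul_pow, mul_comm, huKu, one_pow]
    have hexp : v + (n:ℂ) * l * u^n
        = ((Complex.abs v - ρ * n * M : ℝ) : ℂ) * (v / (Complex.abs v : ℂ)) := by
      rw [hl, hlam, if_neg hv0]
      calc v + (n:ℂ) * (-(ρ:ℂ) * (v / (Complex.abs v : ℂ)) * ((starRingEnd ℂ) u)^n * (M:ℂ)) * u^n
          = v + (n:ℂ) * (-(ρ:ℂ)) * (M:ℂ) * (v / (Complex.abs v : ℂ))
              * (((starRingEnd ℂ) u)^n * u^n) := by ring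
        _ = v - (n:ℂ) * (ρ:ℂ) * (M:ℂ) * (v / (Complex.abs v : ℂ)) := by rw [hKuu]; ring
        _ = ((Complex.abs v : ℂ) - (ρ:ℂ) * (n:ℂ) * (M:ℂ)) * (v / (Complex.abs v : ℂ)) := by
            field_simp
        _ = ((Complex.abs v - ρ * n * M : ℝ) : ℂ) * (v / (Complex.abs v : ℂ)) := by
            push_cast; ring
    rw [hexp, map_mul, map_div₀, Complex.abs_ofReal, Complex.abs_ofReal, Complex.abs_abs,
      div_self hva.ne', mul_one, hvabs]

lemma limstep {x y c : ℝ} (hc : 0 < c) (h : ∀ ρ : ℝ, 1 < ρ → x ≤ |y - ρ * c|) : x ≤ |y - c| := by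
  apply le_of_forall_pos_le_add
  intro ε hε
  have h1 : (1:ℝ) < 1 + ε / c := by
    have := div_pos hε hc; linarith
  have h2 : |y - (1 + ε/c) * c| ≤ |y - c| + ε := by
    have h3 : y - (1 + ε/c) * c = (y - c) + (-ε) := by field_simp; ring
    rw [h3]
    refine (abs_add_le _ _).trans ?_
    rw [abs_neg, abs_of_pos hε]
  exact (h _ h1).trans h2

lemma lemmaA {n : ℕ} (hn : 1 ≤ n) {a : ℂ} (ha : a ≠ 0) {z : Fin n → ℂ} {P : Polynomial ℂ}
    (hP : P = C a * ∏ ν, (X - C (z ν))) (hz0 : ∀ ν, z ν ≠ 0)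
    {M : ℝ} (hM : ∀ ζ : ℂ, Complex.abs ζ = 1 → Complex.abs (eval ζ P) ≤ M)
    {u : ℂ} (hu : Complex.abs u = 1) :
    Complex.abs (eval u (derivative P))
      + Complex.abs ((n:ℂ) * eval u P - u * eval u (derivative P)) ≤ n * M := by
  have hPin := maxmod hM
  have hQcirc : ∀ ζ : ℂ, Complex.abs ζ = 1 → Complex.abs (eval ζ (Qp n a z)) ≤ M := by
    intro ζ hζ
    have hζ0 : ζ ≠ 0 := by
      intro h; rw [h, map_zero] at hζ; norm_num at hζ
    rw [identI5 hP hz0 hζ0, map_mul, map_pow, hζ, one_pow, one_mul, Complex.abs_conj]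
    apply hM
    rw [map_inv₀, Complex.abs_conj, hζ, inv_one]
  have hQin := maxmod hQcirc
  have hQc0 : Qc n a z ≠ 0 := by
    apply mul_ne_zero (star_ne_zero.2 ha)
    rw [Finset.prod_ne_zero_iff]
    exact fun ν _ => neg_ne_zero.2 (star_ne_zero.2 (hz0 ν))
  have hQ0 : eval 0 (Qp n a z) = (starRingEnd ℂ) a := by
    rw [evalQ]
    rw [Qc, mul_assoc, ← Finset.prod_mul_distrib]
    rw [Finset.prod_congr rfl (g := fun _ => (1:ℂ)) fun ν _ => ?_, Finset.prod_const_one, mul_one]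
    have : (starRingEnd ℂ) (z ν) ≠ 0 := star_ne_zero.2 (hz0 ν)
    field_simp
    simp
  have hM0 : 0 < M := by
    have h1 := hQin 0 (by simp)
    rw [hQ0] at h1
    have : 0 < Complex.abs ((starRingEnd ℂ) a) := Complex.abs.pos (star_ne_zero.2 ha)
    linarith
  obtain ⟨hPdeg', hPcoeff'⟩ := coeff_facts a ha z
  rw [← hP] at hPdeg' hPcoeff'
  obtain ⟨hQdeg, hQcoeff⟩ := coeff_facts (Qc n a z) hQc0 (fun ν => ((starRingEnd ℂ) (z ν))⁻¹)
  rw [show (C (Qc n a z) * ∏ ν, (X - C (((starRingEnd ℂ) (z ν))⁻¹))) = Qp n a z from rfl]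
    at hQdeg hQcoeff
  -- remaining part of lemmaA
  have habsa : Complex.abs (P.coeff n) ≤ M := by
    rw [hPcoeff']
    have h1 := hQin 0 (by simp)
    rw [hQ0, Complex.abs_conj] at h1
    exact h1
  have habsQc : Complex.abs ((Qp n a z).coeff n) ≤ M := by
    rw [hQcoeff]
    have heq : Complex.abs (Qc n a z) = Complex.abs (eval 0 P) := by
      rw [evalP hP, Qc, map_mul, map_mul, map_prod, map_prod, Complex.abs_conj]
      congr 1
      refine Finset.prod_congr rfl fun ν _ => ?_
      rw [map_neg_eq_map, Complex.abs_conj, zero_sub, map_neg_eq_map]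
    rw [heq]
    exact hPin 0 (by simp)
  have hnM : (0:ℝ) < n * M := by
    have : (1:ℝ) ≤ n := by exact_mod_cast hn
    nlinarith
  have huKu : u * (starRingEnd ℂ) u = 1 := by
    rw [Complex.mul_conj]
    norm_cast
    rw [← Complex.sq_abs, hu]; norm_num
  have hKu1 : Complex.abs ((starRingEnd ℂ) u) = 1 := by rw [Complex.abs_conj, hu]
  set p : ℝ := Complex.abs (eval u (derivative P)) with hp
  set q : ℝ := Complex.abs ((n:ℂ) * eval u P - u * eval u (derivative P)) with hq
  -- identities
  have hqQ' : Complex.abs (eval u (derivative (Qp n a z))) = q := by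
    have h1 := identI2 hP hz0 huKu
    have h2 := congrArg Complex.abs h1
    rw [map_mul, Complex.abs_conj, map_pow, hu, one_pow, mul_one] at h2
    rw [h2, hq]
  have hpQ : Complex.abs ((n:ℂ) * eval u (Qp n a z) - u * eval u (derivative (Qp n a z))) = p := by
    have h1 := identI3 hP hz0 huKu
    have h2 := congrArg Complex.abs h1
    rw [Complex.abs_conj, map_mul, map_pow, hKu1, one_pow, one_mul] at h2
    rw [h2, hp]
  have hstep1 : q ≤ |p - n * M| := by
    apply limstep hnM
    intro ρ hρ
    have := keystepA hn hM0 hPdeg' habsa (fun r hr => identI4 hP hz0 hr) hQin hu hρ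
    rw [← hq, ← hp] at this
    refine this.trans (le_of_eq ?_)
    ring_nf
  have hstep2 : p ≤ |q - n * M| := by
    apply limstep hnM
    intro ρ hρ
    have := keystepA hn hM0 hQdeg habsQc (fun r hr => identI5 hP hz0 hr) hPin hu hρ
    rw [hqQ', hpQ] at this
    refine this.trans (le_of_eq ?_)
    ring_nf
  have hp0 : 0 ≤ p := Complex.abs.nonneg _
  have hq0 : 0 ≤ q := Complex.abs.nonneg _
  rcases le_or_gt q (n*M) with h | h
  · have he : |q - n*M| = n*M - q := by rw [abs_of_nonpos (by linarith)]; ring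
    rw [he] at hstep2
    linarith
  · rcases le_or_gt p (n*M) with h2 | h2
    · have he : |p - n*M| = n*M - p := by rw [abs_of_nonpos (by linarith)]; ring
      rw [he] at hstep1
      linarith
    · have e1 : |p - n*M| = p - n*M := abs_of_pos (by linarith)
      have e2 : |q - n*M| = q - n*M := abs_of_pos (by linarith)
      rw [e1] at hstep1; rw [e2] at hstep2
      linarith

set_option maxHeartbeats 1000000 in
lemma lemmaB {n : ℕ} (hn : 1 ≤ n) {a : ℂ} (ha : a ≠ 0) {z : Fin n → ℂ} {P : Polynomial ℂ}
    (hP : P = C a * ∏ ν, (X - C (z ν)))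
    {k : Fin n → ℝ} (hk1 : ∀ ν, 1 ≤ k ν) (hzk : ∀ ν, k ν ≤ Complex.abs (z ν))
    {t₀ : ℝ}
    (ht₀ : (∀ ν, 1 < k ν) → t₀ = 1 + (n : ℝ) / ∑ ν, 1 / (k ν - 1))
    (ht₀' : (∃ ν, k ν = 1) → t₀ = 1)
    {w : ℂ} (hw : Complex.abs w = 1) :
    t₀ * Complex.abs (eval w (derivative P))
      ≤ Complex.abs ((n:ℂ) * eval w P - w * eval w (derivative P)) := by
  by_cases hall : ∀ ν, 1 < k ν
  case neg =>
    -- some k ν = 1, t₀ = 1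
    have hex : ∃ ν, k ν = 1 := by
      push_neg at hall
      obtain ⟨ν, hν⟩ := hall
      exact ⟨ν, le_antisymm hν (hk1 ν)⟩
    rw [ht₀' hex, one_mul]
    by_cases hPw : eval w P = 0
    · rw [hPw, mul_zero, zero_sub, map_neg_eq_map, map_mul, hw, one_mul]
    · have hwz : ∀ ν, w ≠ z ν := by
        intro ν heq
        apply hPw
        rw [evalP hP]
        refine mul_eq_zero.2 (Or.inr ?_)
        exact Finset.prod_eq_zero (Finset.mem_univ ν) (by rw [heq]; ring)
      set S : ℂ := ∑ ν, w / (w - z ν) with hS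
      have hlog := finset_logderiv hP hwz
      have hNS : (n:ℂ) * eval w P - w * eval w (derivative P) = ((n:ℂ) - S) * eval w P := by
        linear_combination -hlog
      have hre : S.re ≤ (n:ℝ)/2 := by
        rw [hS, Complex.re_sum]
        calc ∑ ν, (w / (w - z ν)).re ≤ ∑ _ν : Fin n, (1:ℝ)/2 :=
              Finset.sum_le_sum fun ν _ =>
                re_div_le_half hw ((hk1 ν).trans (hzk ν)) (hwz ν)
          _ = (n:ℝ)/2 := by
              rw [Finset.sum_const, Finset.card_univ, Fintype.card_fin, nsmul_eq_mul]; ring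
      have habsS : Complex.abs S ≤ Complex.abs ((n:ℂ) - S) := by
        apply abs_le_of_sq_le_sq'' (Complex.abs.nonneg _) (Complex.abs.nonneg _)
        rw [Complex.sq_abs, Complex.sq_abs]
        simp only [Complex.normSq_apply, Complex.sub_re, Complex.sub_im, Complex.natCast_re,
          Complex.natCast_im]
        have hn0 : (0:ℝ) ≤ (n:ℝ) := Nat.cast_nonneg _
        nlinarith
      calc Complex.abs (eval w (derivative P))
          = Complex.abs (w * eval w (derivative P)) := by rw [map_mul, hw, one_mul]
        _ = Complex.abs S * Complex.abs (eval w P) := by rw [hlog, map_mul]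
        _ ≤ Complex.abs ((n:ℂ) - S) * Complex.abs (eval w P) :=
            mul_le_mul_of_nonneg_right habsS (Complex.abs.nonneg _)
        _ = Complex.abs ((n:ℂ) * eval w P - w * eval w (derivative P)) := by
            rw [hNS, map_mul]
  case pos =>
    have : Nonempty (Fin n) := ⟨⟨0, hn⟩⟩
    have hwz : ∀ ν, w ≠ z ν := by
      intro ν heq
      have := (hall ν).trans_le (hzk ν)
      rw [← heq, hw] at this
      linarith
    have hPw : eval w P ≠ 0 := by
      rw [evalP hP]
      exact mul_ne_zero ha (Finset.prod_ne_zero_iff.2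
        fun ν _ => sub_ne_zero.2 (hwz ν))
    have hk2 : ∀ ν, (0:ℝ) < k ν ^ 2 - 1 := fun ν => by nlinarith [hall ν]
    set Sg : ℝ := ∑ ν, 1 / (k ν - 1) with hSgdef
    set A : ℝ := ∑ ν, 1 / (k ν + 1) with hAdef
    set b : ℝ := ∑ ν, 1 / (k ν ^ 2 - 1) with hbdef
    set R : ℝ := ∑ ν, k ν / (k ν ^ 2 - 1) with hRdef
    have hSg : Sg = R + b := by
      rw [hSgdef, hRdef, hbdef, ← Finset.sum_add_distrib]
      refine Finset.sum_congr rfl fun ν _ => ?_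
      have h1 : k ν - 1 ≠ 0 := by have := hall ν; intro h; nlinarith
      have h2 : k ν ^ 2 - 1 ≠ 0 := (hk2 ν).ne'
      field_simp
      ring
    have hA : A = R - b := by
      rw [hAdef, hRdef, hbdef, ← Finset.sum_sub_distrib]
      refine Finset.sum_congr rfl fun ν _ => ?_
      have h1 : k ν + 1 ≠ 0 := by have := hall ν; intro h; nlinarith
      have h2 : k ν ^ 2 - 1 ≠ 0 := (hk2 ν).ne'
      field_simp
      ring
    have hbpos : 0 < b := Finset.sum_pos (fun ν _ => one_div_pos.2 (hk2 ν)) Finset.univ_nonempty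
    have hRpos : 0 < R := Finset.sum_pos
      (fun ν _ => div_pos (by linarith [hall ν]) (hk2 ν)) Finset.univ_nonempty
    have hApos : 0 < A := Finset.sum_pos
      (fun ν _ => by have := hall ν; positivity) Finset.univ_nonempty
    have hSgpos : 0 < Sg := by rw [hSg]; linarith
    have ht : t₀ = 1 + (n:ℝ) / Sg := ht₀ hall
    have ht' : t₀ * Sg = Sg + n := by rw [ht]; field_simp
    have ht1 : 1 ≤ t₀ := by
      rw [ht]
      have : 0 ≤ (n:ℝ) / Sg := div_nonneg (Nat.cast_nonneg _) hSgpos.le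
      linarith
    -- Chebyshev
    have hCheb : A * Sg ≤ (n:ℝ) * b := by
      have hmono : MonovaryOn (fun ν => 1 / (k ν + 1)) (fun ν => 1 / (k ν - 1))
          (Finset.univ : Finset (Fin n)) := by
        intro i _ j _ hg
        simp only at hg ⊢
        have hi : (0:ℝ) < k i - 1 := by linarith [hall i]
        have hj : (0:ℝ) < k j - 1 := by linarith [hall j]
        have : k j - 1 < k i - 1 := lt_of_one_div_lt_one_div hi hg
        apply one_div_le_one_div_of_le (by linarith [hall j])
        linarith
      have h1 := hmono.sum_mul_sum_le_card_mul_sum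
      rw [Finset.card_univ, Fintype.card_fin] at h1
      have h2 : ∑ ν, (1 / (k ν + 1) * (1 / (k ν - 1))) = b := by
        rw [hbdef]
        refine Finset.sum_congr rfl fun ν _ => ?_
        have h1' : k ν + 1 ≠ 0 := by have := hall ν; intro h; nlinarith
        have h2' : k ν - 1 ≠ 0 := by have := hall ν; intro h; nlinarith
        have h3' : k ν ^ 2 - 1 ≠ 0 := (hk2 ν).ne'
        field_simp
        ring
      calc A * Sg ≤ (n:ℝ) * ∑ ν, (1 / (k ν + 1) * (1 / (k ν - 1))) := h1
        _ = (n:ℝ) * b := by rw [h2]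
    clear_value Sg A b R
    -- the sum S and perturbation E
    set S : ℂ := ∑ ν, w / (w - z ν) with hS
    set E : ℂ := ∑ ν, (w / (w - z ν) + 1 / ((k ν ^ 2 - 1 : ℝ) : ℂ)) with hE
    have hEabs : Complex.abs E ≤ R := by
      rw [hE, hRdef]
      refine (Complex.abs.sum_le _ _).trans (Finset.sum_le_sum fun ν _ => ?_)
      exact disk_lemma hw (hall ν) (hzk ν)
    have hcast : ((b:ℝ):ℂ) = ∑ ν, (1 / ((k ν ^ 2 - 1 : ℝ) : ℂ)) := by
      rw [hbdef, Complex.ofReal_sum]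
      exact Finset.sum_congr rfl fun ν _ => by norm_num
    have hSE : E = S + (b:ℂ) := by
      rw [hE, hS, Finset.sum_add_distrib, hcast]
    -- real reduction
    clear_value S E
    set x : ℝ := E.re with hx
    set y : ℝ := E.im with hy
    clear_value x y
    have hx2 : x^2 + y^2 ≤ R^2 := by
      have h1 := Complex.sq_abs E
      rw [Complex.normSq_apply, ← hx, ← hy] at h1
      nlinarith [hEabs, Complex.abs.nonneg E]
    have hxle : x ≤ R := by nlinarith [sq_nonneg y]
    have hxge : -R ≤ x := by nlinarith [sq_nonneg y]
    have hRb : 0 ≤ R - b := by rw [← hA]; exact hApos.le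
    have ht'' : t₀ * (R + b) = (R + b) + n := by rw [← hSg]; exact ht'
    have hnA : (R - b) + t₀ * (R - b) ≤ n := by
      have hh : t₀ * (R + b) * (R - b) = ((R + b) + n) * (R - b) := by
        linear_combination (R - b) * ht''
      have hCheb' : (R - b) * (R + b) ≤ (n:ℝ) * b := by
        rw [← hA, ← hSg]; exact hCheb
      nlinarith [hh, hCheb', hbpos, hRpos]
    have hFm : (R - x) * (((n:ℝ) + b + R)^2 - t₀^2 * (R + b)^2) = 0 := by
      have h0 : ((n:ℝ) + b + R)^2 - t₀^2 * (R + b)^2 = 0 := by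
        linear_combination (-(((n:ℝ) + b + R) + t₀ * (R + b))) * ht''
      rw [h0, mul_zero]
    have hFR : 0 ≤ ((n:ℝ) + b - R)^2 - t₀^2 * (R - b)^2 := by
      have hv0 : 0 ≤ t₀ * (R - b) := mul_nonneg (by linarith) hRb
      have huv : t₀ * (R - b) ≤ (n:ℝ) + b - R := by linarith
      nlinarith [hv0, huv]
    have hsq : t₀^2 * ((x - b)^2 + y^2) ≤ (((n:ℝ) + b) - x)^2 + y^2 := by
      have h1 : 0 ≤ (R + x) * (((n:ℝ) + b - R)^2 - t₀^2 * (R - b)^2) :=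
        mul_nonneg (by linarith) hFR
      have h2 : 0 ≤ (t₀^2 - 1) * (R^2 - x^2 - y^2) :=
        mul_nonneg (by nlinarith) (by linarith)
      nlinarith [h1, h2, hFm, hRpos]
    -- back to complex
    have hlog := finset_logderiv hP hwz
    rw [← hS] at hlog
    have hNS : (n:ℂ) * eval w P - w * eval w (derivative P) = ((n:ℂ) - S) * eval w P := by
      linear_combination -hlog
    have hSre : S.re = x - b := by
      have := congrArg Complex.re hSE
      simp only [Complex.add_re, Complex.ofReal_re] at this
      rw [← hx] at this
      linarith
    have hSim : S.im = y := by
      have := congrArg Complex.im hSE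
      simp only [Complex.add_im, Complex.ofReal_im] at this
      rw [← hy] at this
      linarith
    have hkey : t₀ * Complex.abs S ≤ Complex.abs ((n:ℂ) - S) := by
      apply abs_le_of_sq_le_sq'' (mul_nonneg (by linarith) (Complex.abs.nonneg _))
        (Complex.abs.nonneg _)
      rw [mul_pow, Complex.sq_abs, Complex.sq_abs]
      simp only [Complex.normSq_apply, Complex.sub_re, Complex.sub_im, Complex.natCast_re,
        Complex.natCast_im, hSre, hSim]
      calc t₀^2 * ((x - b) * (x - b) + y * y) = t₀^2 * ((x - b)^2 + y^2) := by ring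
        _ ≤ (((n:ℝ) + b) - x)^2 + y^2 := hsq
        _ = ((n:ℝ) - (x - b)) * ((n:ℝ) - (x - b)) + (0 - y) * (0 - y) := by ring
    calc t₀ * Complex.abs (eval w (derivative P))
        = t₀ * Complex.abs (w * eval w (derivative P)) := by rw [map_mul, hw, one_mul]
      _ = (t₀ * Complex.abs S) * Complex.abs (eval w P) := by rw [hlog, map_mul]; ring
      _ ≤ Complex.abs ((n:ℂ) - S) * Complex.abs (eval w P) :=
          mul_le_mul_of_nonneg_right hkey (Complex.abs.nonneg _)
      _ = Complex.abs ((n:ℂ) * eval w P - w * eval w (derivative P)) := by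
          rw [hNS, map_mul]

/-- **(Govil–Qazi–Rahman).** If `P(z) = a ∏ (z - z_ν)` has degree `n ≥ 1` with
`|z_ν| ≥ k_ν ≥ 1`, then with `t₀` as defined,
`max_{|z|=1} |P'(z)| ≤ (n/(1 + t₀)) max_{|z|=1} |P(z)|`. -/
theorem stmt_11 (n : ℕ) (hn : 1 ≤ n) (a : ℂ) (ha : a ≠ 0) (z : Fin n → ℂ)
    (P : Polynomial ℂ)
    (hP : P = Polynomial.C a * ∏ ν, (Polynomial.X - Polynomial.C (z ν)))
    (k : Fin n → ℝ) (hk1 : ∀ ν, 1 ≤ k ν) (hzk : ∀ ν, k ν ≤ ‖z ν‖)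
    (t₀ : ℝ)
    (ht₀ : (∀ ν, 1 < k ν) → t₀ = 1 + (n : ℝ) / ∑ ν, 1 / (k ν - 1))
    (ht₀' : (∃ ν, k ν = 1) → t₀ = 1) :
    ∀ w : ℂ, ‖w‖ = 1 →
      ‖P.derivative.eval w‖ ≤
        ((n : ℝ) / (1 + t₀)) *
          sSup ((fun ζ : ℂ => ‖P.eval ζ‖) '' {ζ : ℂ | ‖ζ‖ = 1}) := by
  simp only [Complex.norm_eq_abs] at hzk ⊢
  intro w hw
  set Msup := sSup ((fun ζ : ℂ => Complex.abs (P.eval ζ)) '' {ζ : ℂ | Complex.abs ζ = 1})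
    with hMsup
  have hz0 : ∀ ν, z ν ≠ 0 := by
    intro ν h
    have h1 := (hk1 ν).trans (hzk ν)
    rw [h, map_zero] at h1
    linarith
  have hsphere : {ζ : ℂ | Complex.abs ζ = 1} = Metric.sphere (0:ℂ) 1 := by
    ext ζ
    simp [Complex.dist_eq, Complex.norm_eq_abs]
  have hbdd : BddAbove ((fun ζ : ℂ => Complex.abs (P.eval ζ)) '' {ζ : ℂ | Complex.abs ζ = 1}) := by
    rw [hsphere]
    apply IsCompact.bddAbove_image (isCompact_sphere 0 1)
    exact (Complex.continuous_abs.comp (P.continuous_aeval.congr fun x => by simp [aeval_def, eval₂_eq_eval_map])).continuousOn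
  have hM : ∀ ζ : ℂ, Complex.abs ζ = 1 → Complex.abs (eval ζ P) ≤ Msup := by
    intro ζ h
    exact le_csSup hbdd ⟨ζ, h, rfl⟩
  have ht1 : 1 ≤ t₀ := by
    by_cases hall : ∀ ν, 1 < k ν
    · rw [ht₀ hall]
      have hs : 0 ≤ ∑ ν, 1 / (k ν - 1) :=
        Finset.sum_nonneg fun ν _ => le_of_lt (one_div_pos.2 (by linarith [hall ν]))
      have : 0 ≤ (n:ℝ) / ∑ ν, 1 / (k ν - 1) := div_nonneg (Nat.cast_nonneg _) hs
      linarith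
    · push_neg at hall
      obtain ⟨ν, hν⟩ := hall
      rw [ht₀' ⟨ν, le_antisymm hν (hk1 ν)⟩]
  have hA := lemmaA hn ha hP hz0 hM hw
  have hB := lemmaB hn ha hP hk1 hzk ht₀ ht₀' hw
  have hpos : (0:ℝ) < 1 + t₀ := by linarith
  rw [div_mul_eq_mul_div, le_div_iff₀ hpos]
  have h1 : Complex.abs (eval w (derivative P)) * (1 + t₀)
      ≤ Complex.abs (eval w (derivative P))
        + Complex.abs ((n:ℂ) * eval w P - w * eval w (derivative P)) := by
    nlinarith [hB, Complex.abs.nonneg (eval w (derivative P))]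
  calc Complex.abs (P.derivative.eval w) * (1 + t₀)
      = Complex.abs (eval w (derivative P)) * (1 + t₀) := rfl
    _ ≤ _ := h1
    _ ≤ (n:ℝ) * Msup := hA
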